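/- Let F = F_{q^m}, let d ≥ 2 and let μ, δ, ε ≥ 0 be integers with τ = μ + δ + ε. Let X_1,…,X_τ ∈ F and E_1,…,E_τ ∈ F, and define syndromes S_ℓ = Σ_{j=1}^{τ} X_j^{q^ℓ} E_j for 0 ≤ ℓ ≤ d−2. Let σ_0,…,σ_{δ+ε} ∈ F satisfy Σ_{i=0}^{δ+ε} σ_i E_j^{q^i} = 0 for every j ∈ {μ+1,…,τ}, and set β_j = Σ_{i=0}^{δ+ε} σ_i E_j^{q^i} for j ∈ {1,…,μ}. Then for every k with δ + ε ≤ k ≤ d − 2, Σ_{i=0}^{δ+ε} σ_i S_{k−i}^{q^i} = Σ_{j=1}^{μ} X_j^{q^k} β_j. -/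

import Mathlib

/-- with syndromes `S_ℓ = Σ_{j<τ} X_j^{q^ℓ} E_j` (for
`ℓ ≤ d−2`), an error-span polynomial `σ` of `q`-degree `δ+ε` annihilating
`E_j` for `μ ≤ j < τ`, and `β_j = Σ_i σ_i E_j^{q^i}` for `j < μ`, one has,
for all `δ + ε ≤ k ≤ d − 2`,
`Σ_{i=0}^{δ+ε} σ_i S_{k−i}^{q^i} = Σ_{j<μ} X_j^{q^k} β_j`. -/
theorem modified_syndrome_identity
    {F : Type*} [Field F] [Fintype F] {p s mm q d μ δ ε τ : ℕ}
    [Fact p.Prime] [CharP F p]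
    (hs : 1 ≤ s) (hq : q = p ^ s) (hcard : Fintype.card F = q ^ mm)
    (hd : 2 ≤ d) (hτ : τ = μ + δ + ε)
    (X E : ℕ → F)
    (S : ℕ → F)
    (hS : ∀ ℓ ≤ d - 2, S ℓ = ∑ j ∈ Finset.range τ, X j ^ q ^ ℓ * E j)
    (σ : ℕ → F)
    (hσ : ∀ j, μ ≤ j → j < τ →
      ∑ i ∈ Finset.range (δ + ε + 1), σ i * E j ^ q ^ i = 0)
    (β : ℕ → F)
    (hβ : ∀ j < μ, β j = ∑ i ∈ Finset.range (δ + ε + 1), σ i * E j ^ q ^ i)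
    (k : ℕ) (hk1 : δ + ε ≤ k) (hk2 : k ≤ d - 2) :
    ∑ i ∈ Finset.range (δ + ε + 1), σ i * S (k - i) ^ q ^ i
      = ∑ j ∈ Finset.range μ, X j ^ q ^ k * β j := by

  have key : ∀ i ∈ Finset.range (δ + ε + 1), σ i * S (k - i) ^ q ^ i
      = ∑ j ∈ Finset.range τ, σ i * (X j ^ q ^ k * E j ^ q ^ i) := by
    intro i hi
    rw [Finset.mem_range, Nat.lt_succ_iff] at hi
    have hik : i ≤ k := hi.trans hk1
    have hle : k - i ≤ d - 2 := le_trans (Nat.sub_le _ _) hk2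
    rw [hS _ hle, hq]
    have hpow : ((p ^ s) ^ i : ℕ) = p ^ (s * i) := by rw [pow_mul]
    rw [hpow, sum_pow_char_pow, Finset.mul_sum]
    refine Finset.sum_congr rfl fun j _ => ?_
    rw [mul_pow, ← pow_mul, ← pow_mul, ← pow_mul, ← pow_add]
    congr 2
    rw [← Nat.mul_add, Nat.sub_add_cancel hik]
  rw [Finset.sum_congr rfl key, Finset.sum_comm]
  have split : Finset.range τ = Finset.range μ ∪ Finset.Ico μ τ := by
    rw [Finset.range_eq_Ico, Finset.range_eq_Ico,
      Finset.Ico_union_Ico_eq_Ico (Nat.zero_le _) (by omega)]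
  rw [split, Finset.sum_union (by
    simp [Finset.disjoint_left, Finset.mem_Ico]; omega)]
  have h2 : ∑ j ∈ Finset.Ico μ τ, ∑ i ∈ Finset.range (δ + ε + 1),
      σ i * (X j ^ q ^ k * E j ^ q ^ i) = 0 := by
    refine Finset.sum_eq_zero fun j hj => ?_
    rw [Finset.mem_Ico] at hj
    have := hσ j hj.1 hj.2
    calc ∑ i ∈ Finset.range (δ + ε + 1), σ i * (X j ^ q ^ k * E j ^ q ^ i)
        = X j ^ q ^ k * ∑ i ∈ Finset.range (δ + ε + 1), σ i * E j ^ q ^ i := by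
          rw [Finset.mul_sum]; refine Finset.sum_congr rfl fun i _ => by ring
      _ = 0 := by rw [this, mul_zero]
  rw [h2, add_zero]
  refine Finset.sum_congr rfl fun j hj => ?_
  rw [Finset.mem_range] at hj
  rw [hβ j hj, Finset.mul_sum]
  refine Finset.sum_congr rfl fun i _ => by ring
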